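/- Let g be a complex semisimple Lie algebra and A(z₁,…,z_n) ⊂ U(g)^{⊗n} the image of a subalgebra A ⊂ U(ĝ₋) under φ_{z₁,…,z_n} = (φ_{z₁}⊗…⊗φ_{z_n})∘diag_n, where A is stable under the derivation ∂_t of U(ĝ₋) induced by ∂_t(g⊗tᵐ) = m·g⊗t^{m−1}. Then A(z₁,…,z_n) is stable under simultaneous translation of parameters: A(z₁+b,…,z_n+b) = A(z₁,…,z_n) for all b with all z_i + b ≠ 0. -/

import Mathlib

open scoped TensorProduct

variable {g : Type*} [LieRing g] [LieAlgebra ℂ g]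

/-- `x^{(i)}`: the element `1 ⊗ ⋯ ⊗ x ⊗ ⋯ ⊗ 1` of `U(g)^{⊗ n}`. -/
noncomputable def slot {n : ℕ} (i : Fin n) (x : g) :
    ⨂[ℂ] _ : Fin n, UniversalEnvelopingAlgebra ℂ g :=
  PiTensorProduct.tprod ℂ
    (Function.update (fun _ => (1 : UniversalEnvelopingAlgebra ℂ g)) i
      (UniversalEnvelopingAlgebra.ι ℂ x))

open scoped TensorProduct
open Polynomial

namespace S19


/-- A sequence of polynomials satisfying the "cleared-denominator derivative recursion"
whose members all vanish at `0` must start at `0`. -/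
lemma poly_seq_zero (q : ℂ[X]) (hq : q.eval 0 ≠ 0) (c : ℕ → ℂ) (p : ℕ → ℂ[X])
    (hrec : ∀ k, p (k + 1) = q * derivative (p k) - c k • (derivative q * p k))
    (hval : ∀ k, (p k).eval 0 = 0) : p 0 = 0 := by
  by_contra h0
  set r := rootMultiplicity 0 (p 0) with hr
  have key : ∀ k, k ≤ r → ∃ h : ℂ[X], p k = X ^ (r - k) * h ∧ h.eval 0 ≠ 0 := by
    intro k
    induction k with
    | zero =>
      intro _
      refine ⟨p 0 /ₘ (X - Polynomial.C 0) ^ r, ?_, ?_⟩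
      · rw [Nat.sub_zero]
        conv_lhs => rw [← Polynomial.pow_mul_divByMonic_rootMultiplicity_eq (p 0) 0]
        simp [hr]
      · exact Polynomial.eval_divByMonic_pow_rootMultiplicity_ne_zero 0 h0
    | succ k ih =>
      intro hk1
      obtain ⟨h, hpk, hh⟩ := ih (Nat.le_of_succ_le hk1)
      set s := r - (k + 1) with hs
      have hrk : r - k = s + 1 := by omega
      refine ⟨q * (Polynomial.C ((s : ℂ) + 1) * h + X * derivative h)
        - c k • (derivative q * X * h), ?_, ?_⟩
      · rw [hrec k, hpk, hrk]
        rw [derivative_mul, derivative_X_pow]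
        simp only [smul_eq_C_mul]
        push_cast
        ring
      · simp only [eval_sub, eval_mul, eval_add, eval_X, eval_C, smul_eq_C_mul]
        simp only [mul_zero, zero_mul, add_zero, sub_zero]
        have hs1 : ((s : ℂ) + 1) ≠ 0 := by
          exact_mod_cast Nat.succ_ne_zero s
        exact mul_ne_zero hq (mul_ne_zero hs1 hh)
  obtain ⟨h, hpr, hh⟩ := key r le_rfl
  rw [Nat.sub_self, pow_zero, one_mul] at hpr
  exact hh (hpr ▸ hval r)

/-- Induction principle for the universal enveloping algebra. -/
lemma uea_induction {R L : Type*} [CommRing R] [LieRing L] [LieAlgebra R L]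
    {p : UniversalEnvelopingAlgebra R L → Prop}
    (halg : ∀ r : R, p (algebraMap R (UniversalEnvelopingAlgebra R L) r))
    (hgen : ∀ x : L, p (UniversalEnvelopingAlgebra.ι R x))
    (hmul : ∀ a b, p a → p b → p (a * b))
    (hadd : ∀ a b, p a → p b → p (a + b)) :
    ∀ a, p a := by
  intro a
  have hsurj : Function.Surjective (UniversalEnvelopingAlgebra.mkAlgHom R L) :=
    by unfold UniversalEnvelopingAlgebra.mkAlgHom; exact RingCon.mkₐ_surjective (α := R) _
  obtain ⟨t, rfl⟩ := hsurj a
  induction t using TensorAlgebra.induction with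
  | algebraMap r => rw [AlgHom.commutes]; exact halg r
  | ι x => exact hgen x
  | mul a b ha hb => rw [map_mul]; exact hmul _ _ ha hb
  | add a b ha hb => rw [map_add]; exact hadd _ _ ha hb

variable {T : Type*} [Ring T] [Algebra ℂ T]

/-- Derivative on the left factor of `ℂ[X] ⊗ T`. -/
noncomputable def delta (T : Type*) [Ring T] [Algebra ℂ T] :
    (ℂ[X] ⊗[ℂ] T) →ₗ[ℂ] (ℂ[X] ⊗[ℂ] T) :=
  LinearMap.rTensor T (derivative : ℂ[X] →ₗ[ℂ] ℂ[X])

lemma delta_tmul (p : ℂ[X]) (t : T) : delta T (p ⊗ₜ t) = derivative p ⊗ₜ t := rfl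

lemma central (p : ℂ[X]) (F : ℂ[X] ⊗[ℂ] T) : (p ⊗ₜ (1 : T)) * F = F * (p ⊗ₜ 1) := by
  induction F using TensorProduct.induction_on with
  | zero => simp
  | tmul r t => simp [Algebra.TensorProduct.tmul_mul_tmul, mul_comm]
  | add x y hx hy => simp [mul_add, add_mul, hx, hy]

lemma delta_mul (F G : ℂ[X] ⊗[ℂ] T) :
    delta T (F * G) = F * delta T G + delta T F * G := by
  induction F using TensorProduct.induction_on with
  | zero => simp
  | tmul p t =>
    induction G using TensorProduct.induction_on with
    | zero => simp
    | tmul r s =>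
      simp only [Algebra.TensorProduct.tmul_mul_tmul, delta_tmul, derivative_mul,
        TensorProduct.add_tmul]
      rw [add_comm]
    | add x y hx hy =>
      simp only [mul_add, map_add, hx, hy]
      abel
  | add x y hx hy =>
    simp only [add_mul, map_add, hx, hy]
    abel

/-- The cleared-denominator derivative operator. -/
noncomputable def Dop (q : ℂ[X]) (c : ℂ) (F : ℂ[X] ⊗[ℂ] T) : ℂ[X] ⊗[ℂ] T :=
  (q ⊗ₜ 1) * delta T F - c • ((derivative q ⊗ₜ 1) * F)

lemma Dop_add (q : ℂ[X]) (c : ℂ) (F G : ℂ[X] ⊗[ℂ] T) :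
    Dop q c (F + G) = Dop q c F + Dop q c G := by
  simp only [Dop, map_add, mul_add, smul_add]
  abel

lemma Dop_smul (q : ℂ[X]) (c : ℂ) (a : ℂ) (F : ℂ[X] ⊗[ℂ] T) :
    Dop q c (a • F) = a • Dop q c F := by
  simp only [Dop, map_smul, mul_smul_comm, smul_sub, smul_comm a c]

lemma Dop_zero (q : ℂ[X]) (c : ℂ) : Dop q c (0 : ℂ[X] ⊗[ℂ] T) = 0 := by
  simp [Dop]

lemma Dop_mul (q : ℂ[X]) (c c' : ℂ) (F G : ℂ[X] ⊗[ℂ] T) :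
    Dop q (c + c') (F * G) = Dop q c F * G + F * Dop q c' G := by
  simp only [Dop, delta_mul]
  rw [mul_add, sub_mul, mul_sub, smul_mul_assoc, mul_smul_comm, add_smul]
  have h1 : (q ⊗ₜ (1:T)) * (F * delta T G) = F * ((q ⊗ₜ 1) * delta T G) := by
    rw [← mul_assoc, central, mul_assoc]
  have h2 : (derivative q ⊗ₜ (1:T)) * (F * G) = F * ((derivative q ⊗ₜ 1) * G) := by
    rw [← mul_assoc, central, mul_assoc]
  have h3 : (derivative q ⊗ₜ (1:T)) * F * G = (derivative q ⊗ₜ (1:T)) * (F * G) := by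
    rw [mul_assoc]
  have h5 : (q ⊗ₜ (1:T)) * (delta T F * G) = (q ⊗ₜ (1:T)) * delta T F * G :=
    (mul_assoc _ _ _).symm
  rw [h1, h3, h2, h5]
  abel

/-- `seq q c F k` is the `k`-th member of the cleared-denominator derivative sequence. -/
noncomputable def seq (q : ℂ[X]) (c : ℂ) (F : ℂ[X] ⊗[ℂ] T) : ℕ → ℂ[X] ⊗[ℂ] T
  | 0 => F
  | (k + 1) => Dop q (c + k) (seq q c F k)

lemma seq_add (q : ℂ[X]) (c : ℂ) (F G : ℂ[X] ⊗[ℂ] T) (k : ℕ) :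
    seq q c (F + G) k = seq q c F k + seq q c G k := by
  induction k with
  | zero => rfl
  | succ k ih => simp only [seq, ih, Dop_add]

lemma seq_smul (q : ℂ[X]) (c : ℂ) (a : ℂ) (F : ℂ[X] ⊗[ℂ] T) (k : ℕ) :
    seq q c (a • F) k = a • seq q c F k := by
  induction k with
  | zero => rfl
  | succ k ih => simp only [seq, ih, Dop_smul]

lemma seq_zero (q : ℂ[X]) (c : ℂ) (k : ℕ) : seq q c (0 : ℂ[X] ⊗[ℂ] T) k = 0 := by
  induction k with
  | zero => rfl
  | succ k ih => simp only [seq, ih, Dop_zero]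

/-- bottom recursion for `seq`. -/
lemma seq_bot (q : ℂ[X]) (c : ℂ) (F : ℂ[X] ⊗[ℂ] T) (k : ℕ) :
    seq q c F (k + 1) = seq q (c + 1) (Dop q c F) k := by
  induction k with
  | zero => simp [seq]
  | succ k ih =>
    show Dop q (c + (k + 1 : ℕ)) (seq q c F (k + 1)) = Dop q ((c+1) + (k : ℕ)) _
    rw [ih]
    congr 1
    push_cast
    ring

lemma tmul_one_mul (p r : ℂ[X]) (Z : ℂ[X] ⊗[ℂ] T) :
    (p ⊗ₜ (1:T)) * ((r ⊗ₜ (1:T)) * Z) = ((p * r) ⊗ₜ (1:T)) * Z := by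
  rw [← mul_assoc, Algebra.TensorProduct.tmul_mul_tmul, one_mul]

lemma smul_tmul_one (a : ℂ) (p : ℂ[X]) (Z : ℂ[X] ⊗[ℂ] T) :
    a • ((p ⊗ₜ (1:T)) * Z) = ((Polynomial.C a * p) ⊗ₜ (1:T)) * Z := by
  rw [← smul_mul_assoc]
  congr 1
  rw [TensorProduct.smul_tmul', smul_eq_C_mul]

lemma Dop_scale (q : ℂ[X]) (c : ℂ) (d : ℕ) (G : ℂ[X] ⊗[ℂ] T) :
    Dop q (c + d) (((q ^ d) ⊗ₜ 1) * G) = ((q ^ d) ⊗ₜ 1) * Dop q c G := by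
  cases d with
  | zero => simp only [pow_zero, Nat.cast_zero, add_zero, ← Algebra.TensorProduct.one_def,
      one_mul]
  | succ d =>
    rw [Dop, Dop, delta_mul, delta_tmul, derivative_pow]
    rw [mul_add, tmul_one_mul, tmul_one_mul, tmul_one_mul, smul_tmul_one]
    rw [mul_sub, mul_smul_comm, tmul_one_mul, tmul_one_mul, smul_tmul_one]
    rw [show q * q ^ (d+1) = q ^ (d+1) * q from by ring]
    rw [sub_eq_iff_eq_add]
    have hp : q * (Polynomial.C ((d+1 : ℕ) : ℂ) * q ^ (d + 1 - 1) * derivative q)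
        = (Polynomial.C (c + ((d+1 : ℕ) : ℂ)) * (derivative q * q ^ (d+1)))
          - Polynomial.C c * (q ^ (d+1) * derivative q) := by
      simp only [Nat.add_sub_cancel]
      push_cast
      simp only [map_add]
      ring
    rw [hp, TensorProduct.sub_tmul, sub_mul]
    abel
  
lemma seq_scale (q : ℂ[X]) (c : ℂ) (d : ℕ) (F : ℂ[X] ⊗[ℂ] T) (k : ℕ) :
    seq q (c + d) (((q ^ d) ⊗ₜ 1) * F) k = ((q ^ d) ⊗ₜ 1) * seq q c F k := by
  induction k with
  | zero => rfl
  | succ k ih =>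
    show Dop q (c + d + k) _ = _
    rw [ih, show c + (d:ℂ) + (k:ℂ) = c + (k:ℂ) + (d:ℂ) from by ring, Dop_scale]
    rfl

/-- Evaluation of the polynomial variable at `c`. -/
noncomputable def ev (c : ℂ) : (ℂ[X] ⊗[ℂ] T) →ₐ[ℂ] T :=
  (Algebra.TensorProduct.lid ℂ T).toAlgHom.comp
    (Algebra.TensorProduct.map (Polynomial.aeval c) (AlgHom.id ℂ T))

lemma ev_tmul (c : ℂ) (p : ℂ[X]) (t : T) : ev c (p ⊗ₜ t) = p.eval c • t := by
  simp [ev, Algebra.TensorProduct.lid_tmul, coe_aeval_eq_eval]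

/-- Scalarization of `ℂ[X] ⊗ T` along a functional on `T`. -/
noncomputable def theta (μ : T →ₗ[ℂ] ℂ) : (ℂ[X] ⊗[ℂ] T) →ₗ[ℂ] ℂ[X] :=
  (TensorProduct.rid ℂ ℂ[X]).toLinearMap.comp (LinearMap.lTensor ℂ[X] μ)

lemma theta_tmul (μ : T →ₗ[ℂ] ℂ) (p : ℂ[X]) (t : T) :
    theta μ (p ⊗ₜ t) = μ t • p := by
  simp [theta]

lemma theta_delta (μ : T →ₗ[ℂ] ℂ) (F : ℂ[X] ⊗[ℂ] T) :
    theta μ (delta T F) = derivative (theta μ F) := by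
  induction F using TensorProduct.induction_on with
  | zero => simp
  | tmul p t => simp [delta_tmul, theta_tmul]
  | add x y hx hy => simp [map_add, hx, hy]

lemma theta_tmul_one_mul (μ : T →ₗ[ℂ] ℂ) (p₀ : ℂ[X]) (F : ℂ[X] ⊗[ℂ] T) :
    theta μ ((p₀ ⊗ₜ 1) * F) = p₀ * theta μ F := by
  induction F using TensorProduct.induction_on with
  | zero => simp
  | tmul p t => simp [Algebra.TensorProduct.tmul_mul_tmul, theta_tmul, one_mul,
      mul_smul_comm]
  | add x y hx hy => simp [mul_add, map_add, hx, hy]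

lemma theta_Dop (μ : T →ₗ[ℂ] ℂ) (q : ℂ[X]) (c : ℂ) (F : ℂ[X] ⊗[ℂ] T) :
    theta μ (Dop q c F) = q * derivative (theta μ F) - c • (derivative q * theta μ F) := by
  rw [Dop, map_sub, map_smul, theta_tmul_one_mul, theta_tmul_one_mul, theta_delta]

lemma eval_theta (μ : T →ₗ[ℂ] ℂ) (c : ℂ) (F : ℂ[X] ⊗[ℂ] T) :
    (theta μ F).eval c = μ (ev c F) := by
  induction F using TensorProduct.induction_on with
  | zero => simp
  | tmul p t => simp [theta_tmul, ev_tmul, mul_comm]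
  | add x y hx hy => simp [map_add, hx, hy]


variable {T : Type*} [Ring T] [Algebra ℂ T]

lemma Dop_tmul (q : ℂ[X]) (c : ℂ) (p : ℂ[X]) (t : T) :
    Dop q c (p ⊗ₜ t) = (q * derivative p - c • (derivative q * p)) ⊗ₜ t := by
  rw [Dop, delta_tmul, Algebra.TensorProduct.tmul_mul_tmul,
    Algebra.TensorProduct.tmul_mul_tmul, one_mul, TensorProduct.smul_tmul',
    ← TensorProduct.sub_tmul]

lemma Dop_sum (q : ℂ[X]) (c : ℂ) {ι : Type*} (s : Finset ι) (f : ι → ℂ[X] ⊗[ℂ] T) :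
    Dop q c (∑ i ∈ s, f i) = ∑ i ∈ s, Dop q c (f i) := by
  classical
  induction s using Finset.induction_on with
  | empty => simp [Dop_zero]
  | insert a s h ih => rw [Finset.sum_insert h, Finset.sum_insert h, Dop_add, ih]

set_option maxHeartbeats 2000000 in
theorem aux {g : Type*} [LieRing g] [LieAlgebra ℂ g] {N : Type*} [LieRing N] [LieAlgebra ℂ N]
    (e : ℕ → g →ₗ[ℂ] N)
    (hsurj : Function.Surjective (Finsupp.lsum ℂ e))
    {n : ℕ}
    (φ : ∀ z : Fin n → ℂ, (∀ i, z i ≠ 0) →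
      (UniversalEnvelopingAlgebra ℂ N →ₐ[ℂ]
        ⨂[ℂ] _ : Fin n, UniversalEnvelopingAlgebra ℂ g))
    (hφ : ∀ (z : Fin n → ℂ) (hz : ∀ i, z i ≠ 0) (m : ℕ) (x : g),
      φ z hz (UniversalEnvelopingAlgebra.ι ℂ (e m x))
        = ∑ i, ((z i)⁻¹) ^ (m + 1) • slot i x)
    (D : UniversalEnvelopingAlgebra ℂ N →ₗ[ℂ] UniversalEnvelopingAlgebra ℂ N)
    (hLeibniz : ∀ a b, D (a * b) = a * D b + D a * b)
    (hDe : ∀ (m : ℕ) (x : g),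
      D (UniversalEnvelopingAlgebra.ι ℂ (e m x))
        = (-(m + 1) : ℂ) • UniversalEnvelopingAlgebra.ι ℂ (e (m + 1) x))
    (A : Subalgebra ℂ (UniversalEnvelopingAlgebra ℂ N))
    (hA : ∀ a ∈ A, D a ∈ A)
    (z : Fin n → ℂ) (hz : ∀ i, z i ≠ 0)
    (w : Fin n → ℂ) (hw : ∀ i, w i ≠ 0)
    (b : ℂ) (hb : ∀ i, w i = z i + b) :
    A.map (φ w hw) ≤ A.map (φ z hz) := by
  classical
  set q : ℂ[X] := ∏ i : Fin n, (X + Polynomial.C (z i)) with hqdef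
  have hlin_eval : ∀ (c : ℂ) (i : Fin n), (X + Polynomial.C (z i)).eval c = c + z i := by
    intro c i; simp
  have hq0 : q.eval 0 ≠ 0 := by
    rw [hqdef, eval_prod]
    exact Finset.prod_ne_zero_iff.2 fun i _ => by simpa [hlin_eval] using hz i
  have hqb : q.eval b ≠ 0 := by
    rw [hqdef, eval_prod]
    refine Finset.prod_ne_zero_iff.2 fun i _ => ?_
    rw [hlin_eval, add_comm, ← hb i]
    exact hw i
  set gp : Fin n → ℂ[X] := fun i => ∏ j ∈ Finset.univ.erase i, (X + Polynomial.C (z j))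
    with hgpdef
  have hqgp : ∀ i, q = (X + Polynomial.C (z i)) * gp i := fun i =>
    (Finset.mul_prod_erase Finset.univ _ (Finset.mem_univ i)).symm
  have coefkey : ∀ (c : ℂ) (v : Fin n → ℂ), (∀ i, v i ≠ 0) → (∀ i, c + z i = v i) →
      ∀ (i : Fin n) (m : ℕ),
        ((gp i).eval c) ^ (m + 1) = (q.eval c) ^ (m + 1) * ((v i)⁻¹) ^ (m + 1) := by
    intro c v hv hcv i m
    have h1 : q.eval c = v i * (gp i).eval c := by
      rw [hqgp i, eval_mul, hlin_eval, hcv]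
    rw [← mul_pow]
    congr 1
    rw [h1, mul_comm (v i), mul_assoc, mul_inv_cancel₀ (hv i), mul_one]
  have gp_key : ∀ i, q * derivative (gp i) - derivative q * gp i = -(gp i ^ 2) := by
    intro i
    have hdq : derivative q = gp i + (X + Polynomial.C (z i)) * derivative (gp i) := by
      conv_lhs => rw [hqgp i]
      rw [derivative_mul]
      simp
    rw [hdq]
    conv_lhs => rw [hqgp i]
    ring
  have Dop_genF : ∀ (m : ℕ) (x : g),
      Dop q ((m : ℂ) + 1) (∑ i, (gp i ^ (m + 1)) ⊗ₜ[ℂ] slot i x)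
        = (-((m : ℂ) + 1)) • ∑ i, (gp i ^ (m + 1 + 1)) ⊗ₜ[ℂ] slot i x := by
    intro m x
    rw [Dop_sum, Finset.smul_sum]
    refine Finset.sum_congr rfl fun i _ => ?_
    rw [Dop_tmul, TensorProduct.smul_tmul']
    congr 1
    rw [derivative_pow, Nat.add_sub_cancel, smul_eq_C_mul, smul_eq_C_mul]
    push_cast
    simp only [map_neg]
    linear_combination (Polynomial.C ((m : ℂ) + 1) * gp i ^ m) * gp_key i
  have Dk_add : ∀ (k : ℕ) (x y : UniversalEnvelopingAlgebra ℂ N),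
      D^[k] (x + y) = D^[k] x + D^[k] y := by
    intro k x y
    simpa only [Module.End.pow_apply] using map_add (D ^ k) x y
  have Dk_smul : ∀ (k : ℕ) (c : ℂ) (x : UniversalEnvelopingAlgebra ℂ N),
      D^[k] (c • x) = c • D^[k] x := by
    intro k c x
    simpa only [Module.End.pow_apply] using map_smul (D ^ k) c x
  have Dk_zero : ∀ k : ℕ, D^[k] (0 : UniversalEnvelopingAlgebra ℂ N) = 0 := by
    intro k
    simpa only [Module.End.pow_apply] using map_zero (D ^ k)
  have gen1 : ∀ (k m : ℕ) (x : g),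
      ev 0 (seq q ((m : ℂ) + 1) (∑ i, (gp i ^ (m + 1)) ⊗ₜ[ℂ] slot i x) k)
        = (q.eval 0) ^ (m + 1 + k)
            • φ z hz (D^[k] (UniversalEnvelopingAlgebra.ι ℂ (e m x))) := by
    intro k
    induction k with
    | zero =>
      intro m x
      show ev 0 (∑ i, (gp i ^ (m + 1)) ⊗ₜ[ℂ] slot i x) = _
      rw [Function.iterate_zero_apply, hφ z hz m x, map_sum, Finset.smul_sum,
        Nat.add_zero]
      refine Finset.sum_congr rfl fun i _ => ?_
      rw [ev_tmul, eval_pow, smul_smul,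
        coefkey 0 z hz (fun j => zero_add (z j)) i m]
    | succ k ih =>
      intro m x
      rw [seq_bot, Dop_genF m x, seq_smul, map_smul,
        show (m : ℂ) + 1 + 1 = ((m + 1 : ℕ) : ℂ) + 1 from by push_cast; ring,
        ih (m + 1) x,
        Function.iterate_succ_apply, hDe m x, Dk_smul, map_smul,
        smul_smul, smul_smul,
        show m + 1 + (k + 1) = m + 1 + 1 + k from by omega]
      congr 1
      push_cast
      ring
  have gen2 : ∀ (m : ℕ) (x : g),
      ev b (∑ i, (gp i ^ (m + 1)) ⊗ₜ[ℂ] slot i x)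
        = (q.eval b) ^ (m + 1) • φ w hw (UniversalEnvelopingAlgebra.ι ℂ (e m x)) := by
    intro m x
    rw [hφ w hw m x, map_sum, Finset.smul_sum]
    refine Finset.sum_congr rfl fun i _ => ?_
    rw [ev_tmul, eval_pow, smul_smul,
      coefkey b w hw (fun j => by rw [add_comm]; exact (hb j).symm) i m]
  have mulkey : ∀ (k : ℕ) (a a' : UniversalEnvelopingAlgebra ℂ N) (M M' : ℕ)
      (F F' : ℂ[X] ⊗[ℂ] (⨂[ℂ] _ : Fin n, UniversalEnvelopingAlgebra ℂ g)),
      (∀ j, ev 0 (seq q (M : ℂ) F j) = (q.eval 0) ^ (M + j) • φ z hz (D^[j] a)) →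
      (∀ j, ev 0 (seq q (M' : ℂ) F' j) = (q.eval 0) ^ (M' + j) • φ z hz (D^[j] a')) →
      ev 0 (seq q ((M : ℂ) + (M' : ℂ)) (F * F') k)
        = (q.eval 0) ^ (M + M' + k) • φ z hz (D^[k] (a * a')) := by
    intro k
    induction k with
    | zero =>
      intro a a' M M' F F' h h'
      have hF : ev 0 F = (q.eval 0) ^ (M + 0) • φ z hz (D^[0] a) := h 0
      have hF' : ev 0 F' = (q.eval 0) ^ (M' + 0) • φ z hz (D^[0] a') := h' 0
      show ev 0 (F * F') = _
      rw [map_mul, hF, hF', Function.iterate_zero_apply, Function.iterate_zero_apply,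
        Function.iterate_zero_apply, smul_mul_smul_comm, ← map_mul, ← pow_add,
        show M + 0 + (M' + 0) = M + M' + 0 from by omega]
    | succ k ih =>
      intro a a' M M' F F' h h'
      have hshift : ∀ (a₀ : UniversalEnvelopingAlgebra ℂ N) (M₀ : ℕ)
          (F₀ : ℂ[X] ⊗[ℂ] (⨂[ℂ] _ : Fin n, UniversalEnvelopingAlgebra ℂ g)),
          (∀ j, ev 0 (seq q (M₀ : ℂ) F₀ j) = (q.eval 0) ^ (M₀ + j) • φ z hz (D^[j] a₀)) →
          ∀ j, ev 0 (seq q ((M₀ + 1 : ℕ) : ℂ) (Dop q (M₀ : ℂ) F₀) j)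
            = (q.eval 0) ^ (M₀ + 1 + j) • φ z hz (D^[j] (D a₀)) := by
        intro a₀ M₀ F₀ h₀ j
        rw [show ((M₀ + 1 : ℕ) : ℂ) = (M₀ : ℂ) + 1 from by push_cast; ring, ← seq_bot,
          h₀ (j + 1), Function.iterate_succ_apply,
          show M₀ + (j + 1) = M₀ + 1 + j from by omega]
      rw [seq_bot, Dop_mul, seq_add, map_add]
      have t1 : ev 0 (seq q ((M : ℂ) + (M' : ℂ) + 1) (Dop q (M : ℂ) F * F') k)
          = (q.eval 0) ^ (M + 1 + M' + k) • φ z hz (D^[k] (D a * a')) := by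
        rw [show (M : ℂ) + (M' : ℂ) + 1 = ((M + 1 : ℕ) : ℂ) + (M' : ℂ) from by
          push_cast; ring]
        exact ih (D a) a' (M + 1) M' _ _ (hshift a M F h) h'
      have t2 : ev 0 (seq q ((M : ℂ) + (M' : ℂ) + 1) (F * Dop q (M' : ℂ) F') k)
          = (q.eval 0) ^ (M + (M' + 1) + k) • φ z hz (D^[k] (a * D a')) := by
        rw [show (M : ℂ) + (M' : ℂ) + 1 = ((M : ℕ) : ℂ) + ((M' + 1 : ℕ) : ℂ) from by
          push_cast; ring]
        exact ih a (D a') M (M' + 1) _ _ h (hshift a' M' F' h')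
      rw [t1, t2, Function.iterate_succ_apply, hLeibniz a a', Dk_add, map_add, smul_add,
        show M + 1 + M' + k = M + M' + (k + 1) from by omega,
        show M + (M' + 1) + k = M + M' + (k + 1) from by omega]
      rw [add_comm]
  have hD1 : D 1 = 0 := by
    have h := hLeibniz 1 1
    rw [one_mul, one_mul, mul_one] at h
    exact (left_eq_add.mp h)
  -- closure properties
  have good_zero : ∃ (M : ℕ) (F : ℂ[X] ⊗[ℂ] (⨂[ℂ] _ : Fin n, UniversalEnvelopingAlgebra ℂ g)),
      (∀ k, ev 0 (seq q (M : ℂ) F k)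
          = (q.eval 0) ^ (M + k) • φ z hz (D^[k] (0 : UniversalEnvelopingAlgebra ℂ N))) ∧
        ev b F = (q.eval b) ^ M • φ w hw (0 : UniversalEnvelopingAlgebra ℂ N) := by
    refine ⟨0, 0, fun k => ?_, ?_⟩
    · rw [seq_zero, map_zero, Dk_zero, map_zero, smul_zero]
    · rw [map_zero, map_zero, smul_zero]
  have good_add : ∀ a a' : UniversalEnvelopingAlgebra ℂ N,
      (∃ (M : ℕ) (F : ℂ[X] ⊗[ℂ] (⨂[ℂ] _ : Fin n, UniversalEnvelopingAlgebra ℂ g)),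
        (∀ k, ev 0 (seq q (M : ℂ) F k) = (q.eval 0) ^ (M + k) • φ z hz (D^[k] a)) ∧
          ev b F = (q.eval b) ^ M • φ w hw a) →
      (∃ (M : ℕ) (F : ℂ[X] ⊗[ℂ] (⨂[ℂ] _ : Fin n, UniversalEnvelopingAlgebra ℂ g)),
        (∀ k, ev 0 (seq q (M : ℂ) F k) = (q.eval 0) ^ (M + k) • φ z hz (D^[k] a')) ∧
          ev b F = (q.eval b) ^ M • φ w hw a') →
      ∃ (M : ℕ) (F : ℂ[X] ⊗[ℂ] (⨂[ℂ] _ : Fin n, UniversalEnvelopingAlgebra ℂ g)),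
        (∀ k, ev 0 (seq q (M : ℂ) F k) = (q.eval 0) ^ (M + k) • φ z hz (D^[k] (a + a'))) ∧
          ev b F = (q.eval b) ^ M • φ w hw (a + a') := by
    rintro a a' ⟨M, F, h1, h2⟩ ⟨M', F', h1', h2'⟩
    refine ⟨M + M', ((q ^ M') ⊗ₜ 1) * F + ((q ^ M) ⊗ₜ 1) * F', fun k => ?_, ?_⟩
    · rw [seq_add, map_add]
      have u1 : seq q ((M + M' : ℕ) : ℂ) (((q ^ M') ⊗ₜ 1) * F) k
          = ((q ^ M') ⊗ₜ 1) * seq q (M : ℂ) F k := by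
        rw [show ((M + M' : ℕ) : ℂ) = (M : ℂ) + (M' : ℕ) from by push_cast; ring]
        exact seq_scale q (M : ℂ) M' F k
      have u2 : seq q ((M + M' : ℕ) : ℂ) (((q ^ M) ⊗ₜ 1) * F') k
          = ((q ^ M) ⊗ₜ 1) * seq q (M' : ℂ) F' k := by
        rw [show ((M + M' : ℕ) : ℂ) = (M' : ℂ) + (M : ℕ) from by push_cast; ring]
        exact seq_scale q (M' : ℂ) M F' k
      rw [u1, u2, map_mul, map_mul, ev_tmul, ev_tmul, eval_pow, eval_pow, h1 k, h1' k,
        smul_one_mul, smul_one_mul, smul_smul, smul_smul, ← pow_add, ← pow_add,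
        Dk_add, map_add, smul_add,
        show M' + (M + k) = M + M' + k from by omega,
        show M + (M' + k) = M + M' + k from by omega]
    · rw [map_add, map_mul, map_mul, ev_tmul, ev_tmul, eval_pow, eval_pow, h2, h2',
        smul_one_mul, smul_one_mul, smul_smul, smul_smul, ← pow_add, ← pow_add,
        map_add, smul_add, show M' + M = M + M' from by omega]
  have good_e : ∀ (m : ℕ) (x : g),
      ∃ (M : ℕ) (F : ℂ[X] ⊗[ℂ] (⨂[ℂ] _ : Fin n, UniversalEnvelopingAlgebra ℂ g)),
        (∀ k, ev 0 (seq q (M : ℂ) F k)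
            = (q.eval 0) ^ (M + k) • φ z hz (D^[k] (UniversalEnvelopingAlgebra.ι ℂ (e m x)))) ∧
          ev b F = (q.eval b) ^ M
            • φ w hw (UniversalEnvelopingAlgebra.ι ℂ (e m x)) := by
    intro m x
    refine ⟨m + 1, ∑ i, (gp i ^ (m + 1)) ⊗ₜ slot i x, fun k => ?_, gen2 m x⟩
    rw [show ((m + 1 : ℕ) : ℂ) = (m : ℂ) + 1 from by push_cast; ring]
    exact gen1 k m x
  have good_all : ∀ a : UniversalEnvelopingAlgebra ℂ N,
      ∃ (M : ℕ) (F : ℂ[X] ⊗[ℂ] (⨂[ℂ] _ : Fin n, UniversalEnvelopingAlgebra ℂ g)),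
        (∀ k, ev 0 (seq q (M : ℂ) F k) = (q.eval 0) ^ (M + k) • φ z hz (D^[k] a)) ∧
          ev b F = (q.eval b) ^ M • φ w hw a := by
    apply uea_induction
    · -- algebraMap
      intro r
      refine ⟨0, algebraMap ℂ _ r, fun k => ?_, ?_⟩
      · cases k with
        | zero =>
          show ev 0 (algebraMap ℂ _ r) = _
          rw [AlgHom.commutes, Function.iterate_zero_apply, AlgHom.commutes]
          norm_num
        | succ k =>
          have hD0 : D (algebraMap ℂ (UniversalEnvelopingAlgebra ℂ N) r) = 0 := by
            rw [Algebra.algebraMap_eq_smul_one, map_smul, hD1, smul_zero]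
          have hFz : Dop q ((0 : ℕ) : ℂ)
              (algebraMap ℂ (ℂ[X] ⊗[ℂ] (⨂[ℂ] _ : Fin n, UniversalEnvelopingAlgebra ℂ g)) r)
              = 0 := by
            rw [Algebra.algebraMap_eq_smul_one, Dop_smul, Algebra.TensorProduct.one_def,
              Dop_tmul]
            simp
          rw [seq_bot, hFz, seq_zero, map_zero, Function.iterate_succ_apply, hD0, Dk_zero,
            map_zero, smul_zero]
      · rw [AlgHom.commutes, AlgHom.commutes, pow_zero, one_smul]
    · -- generators
      intro y
      obtain ⟨f, rfl⟩ := hsurj y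
      rw [Finsupp.lsum_apply]
      have hι : (UniversalEnvelopingAlgebra.ι ℂ (f.sum fun m xm => e m xm)
            : UniversalEnvelopingAlgebra ℂ N)
          = ∑ m ∈ f.support, UniversalEnvelopingAlgebra.ι ℂ (e m (f m)) := by
        exact map_finsuppSum (UniversalEnvelopingAlgebra.ι ℂ (L := N)) f _
      rw [hι]
      refine Finset.sum_induction _ _ good_add good_zero fun m _ => good_e m (f m)
    · -- mul
      rintro a a' ⟨M, F, h1, h2⟩ ⟨M', F', h1', h2'⟩
      refine ⟨M + M', F * F', fun k => ?_, ?_⟩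
      · rw [show ((M + M' : ℕ) : ℂ) = (M : ℂ) + (M' : ℂ) from by push_cast; ring]
        exact mulkey k a a' M M' F F' h1 h1'
      · rw [map_mul, h2, h2', map_mul, smul_mul_smul_comm, ← pow_add]
    · -- add
      exact good_add
  -- final argument
  intro y hy
  rw [Subalgebra.mem_map] at hy
  obtain ⟨a, haA, rfl⟩ := hy
  obtain ⟨M, F, h1, h2⟩ := good_all a
  have hk : ∀ k, D^[k] a ∈ A := by
    intro k
    induction k with
    | zero => exact haA
    | succ k ih => rw [Function.iterate_succ_apply']; exact hA _ ih
  set V : Submodule ℂ (⨂[ℂ] _ : Fin n, UniversalEnvelopingAlgebra ℂ g) :=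
    Subalgebra.toSubmodule (A.map (φ z hz)) with hV
  have hmem : φ w hw a ∈ V := by
    have hquot : V.mkQ (φ w hw a) = 0 := by
      rw [← Module.forall_dual_apply_eq_zero_iff ℂ]
      intro lam
      set μ : (⨂[ℂ] _ : Fin n, UniversalEnvelopingAlgebra ℂ g) →ₗ[ℂ] ℂ :=
        lam ∘ₗ V.mkQ with hμ
      have hμV : ∀ v ∈ V, μ v = 0 := by
        intro v hv
        rw [hμ]
        simp only [LinearMap.comp_apply, Submodule.mkQ_apply]
        rw [(Submodule.Quotient.mk_eq_zero V).2 hv, map_zero]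
      have hps : theta μ F = 0 := by
        refine poly_seq_zero q hq0 (fun k => (M : ℂ) + k)
          (fun k => theta μ (seq q (M : ℂ) F k)) (fun k => ?_) (fun k => ?_)
        · show theta μ (Dop q ((M : ℂ) + k) (seq q (M : ℂ) F k)) = _
          rw [theta_Dop]
        · have hVk : φ z hz (D^[k] a) ∈ V := by
            rw [hV]
            exact (Subalgebra.mem_toSubmodule _).2 (Subalgebra.mem_map.2 ⟨D^[k] a, hk k, rfl⟩)
          rw [eval_theta, h1 k, map_smul, hμV _ hVk, smul_zero]
      have h3 : μ (ev b F) = 0 := by rw [← eval_theta, hps, eval_zero]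
      rw [h2, map_smul, smul_eq_zero] at h3
      have h4 : μ (φ w hw a) = 0 := h3.resolve_left (pow_ne_zero M hqb)
      rw [hμ] at h4
      simpa only [LinearMap.comp_apply, Submodule.mkQ_apply] using h4
    rw [Submodule.mkQ_apply] at hquot
    exact (Submodule.Quotient.mk_eq_zero V).1 hquot
  rw [hV] at hmem
  exact (Subalgebra.mem_toSubmodule _).1 hmem

end S19

/-- let `N = ĝ₋` be presented by the maps `e n` (`e n x` representing
`x ⊗ t^{-(n+1)}`), let `φ_{z₁,…,zₙ} = (φ_{z₁} ⊗ ⋯ ⊗ φ_{z_n}) ∘ diag_n` be the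
evaluation homomorphisms `U(ĝ₋) → U(g)^{⊗ n}` (characterized by their values on the
generators), let `D = ∂_t` be the derivation of `U(ĝ₋)` with
`∂_t(x ⊗ tᵐ) = m·x ⊗ t^{m−1}`, and let `A ⊆ U(ĝ₋)` be a subalgebra stable under
`∂_t`.  Then `A(z₁,…,z_n) = φ_{z₁,…,z_n}(A)` is stable under simultaneous translation
of the parameters: `A(z₁+b,…,z_n+b) = A(z₁,…,z_n)` whenever all `z_i` and `z_i + b`
are nonzero. -/
theorem stmt19 {N : Type*} [LieRing N] [LieAlgebra ℂ N]
    (e : ℕ → g →ₗ[ℂ] N)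
    (hbracket : ∀ (m k : ℕ) (x y : g), ⁅e m x, e k y⁆ = e (m + k + 1) ⁅x, y⁆)
    (hbij : Function.Bijective (Finsupp.lsum ℂ e))
    {n : ℕ}
    (φ : ∀ z : Fin n → ℂ, (∀ i, z i ≠ 0) →
      (UniversalEnvelopingAlgebra ℂ N →ₐ[ℂ]
        ⨂[ℂ] _ : Fin n, UniversalEnvelopingAlgebra ℂ g))
    (hφ : ∀ (z : Fin n → ℂ) (hz : ∀ i, z i ≠ 0) (m : ℕ) (x : g),
      φ z hz (UniversalEnvelopingAlgebra.ι ℂ (e m x))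
        = ∑ i, ((z i)⁻¹) ^ (m + 1) • slot i x)
    (D : UniversalEnvelopingAlgebra ℂ N →ₗ[ℂ] UniversalEnvelopingAlgebra ℂ N)
    (hLeibniz : ∀ a b, D (a * b) = a * D b + D a * b)
    (hDe : ∀ (m : ℕ) (x : g),
      D (UniversalEnvelopingAlgebra.ι ℂ (e m x))
        = (-(m + 1) : ℂ) • UniversalEnvelopingAlgebra.ι ℂ (e (m + 1) x))
    (A : Subalgebra ℂ (UniversalEnvelopingAlgebra ℂ N))
    (hA : ∀ a ∈ A, D a ∈ A)
    (z : Fin n → ℂ) (hz : ∀ i, z i ≠ 0)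
    (b : ℂ) (hzb : ∀ i, z i + b ≠ 0) :
    A.map (φ (fun i => z i + b) hzb) = A.map (φ z hz) := by
  refine le_antisymm
    (S19.aux e hbij.surjective φ hφ D hLeibniz hDe A hA z hz (fun i => z i + b) hzb b
      (fun i => rfl))
    (S19.aux e hbij.surjective φ hφ D hLeibniz hDe A hA (fun i => z i + b) hzb z hz (-b)
      (fun i => by ring))
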